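/- In a polynomial mapping scheme of degree d ≥ 2, if Ω ⊆ Z is a forward-invariant set (α(Ω) ⊆ Ω) disjoint from C, then the number of elements z ∉ Ω with α(z) ∈ Ω is at most d − 1. -/

import Mathlib

/-- A polynomial mapping scheme of degree `d`: `Z = C ∪ P` finite, `α : Z → P` surjective,
`ν : Z → ℕ` with `ν⁻¹({n ≥ 2}) = C`, satisfying Riemann-Hurwitz, the local degree
conditions, and having a fixed point `∞ ∈ C` with `ν ∞ = d`. -/
structure PolyMapScheme (Z : Type*) [Fintype Z] [DecidableEq Z] where
  C : Finset Z
  P : Finset Z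
  α : Z → Z
  ν : Z → ℕ
  d : ℕ
  union_eq : C ∪ P = Finset.univ
  maps_to_P : ∀ z, α z ∈ P
  surj : ∀ p ∈ P, ∃ z, α z = p
  crit_iff : ∀ z, 2 ≤ ν z ↔ z ∈ C
  nu_pos : ∀ z, 1 ≤ ν z
  d_pos : 1 ≤ d
  riemann_hurwitz : ∑ z, (ν z - 1) = 2 * (d - 1)
  local_deg : ∀ z, ∑ x ∈ Finset.univ.filter (fun x => α x = z), ν x ≤ d
  infty : Z
  infty_crit : infty ∈ C
  infty_fixed : α infty = infty
  nu_infty : ν infty = d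

/-- In a polynomial mapping scheme of degree `d ≥ 2`, if `Ω ⊆ Z` is forward-invariant
(`α(Ω) ⊆ Ω`) and disjoint from `C`, then the number of `z ∉ Ω` with `α(z) ∈ Ω` is at
most `d − 1`. -/
theorem stmt_3 {Z : Type*} [Fintype Z] [DecidableEq Z] (S : PolyMapScheme Z)
    (hd : 2 ≤ S.d) (Ω : Finset Z) (hΩC : ∀ z ∈ Ω, z ∉ S.C)
    (hinv : ∀ z ∈ Ω, S.α z ∈ Ω) :
    (Finset.univ.filter (fun z => z ∉ Ω ∧ S.α z ∈ Ω)).card ≤ S.d - 1 := by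
  classical
  -- choose a preimage function for elements of P
  obtain ⟨g, hg⟩ : ∃ g : Z → Z, ∀ p ∈ S.P, S.α (g p) = p := by
    refine ⟨fun p => if h : p ∈ S.P then Classical.choose (S.surj p h) else p, fun p hp => ?_⟩
    simp only [dif_pos hp]
    exact Classical.choose_spec (S.surj p hp)
  have hP : ∀ z : Z, z ∉ S.C → z ∈ S.P := fun z hz => by
    have hu : z ∈ S.C ∪ S.P := S.union_eq ▸ Finset.mem_univ z
    rcases Finset.mem_union.mp hu with h | h
    · exact absurd h hz
    · exact h
  have hΩiter : ∀ n : ℕ, ∀ z ∈ Ω, S.α^[n] z ∈ Ω := by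
    intro n
    induction n with
    | zero => intro z hz; simpa using hz
    | succ n ih =>
      intro z hz
      rw [Function.iterate_succ_apply]
      exact ih _ (hinv z hz)
  -- iterating α undoes iterating g, as long as the chain avoids C
  have chainStep : ∀ (j : ℕ) (x : Z) (n : ℕ), (∀ m < n, g^[m] x ∉ S.C) → j ≤ n →
      S.α^[j] (g^[n] x) = g^[n - j] x := by
    intro j
    induction j with
    | zero => intro x n _ _; simp
    | succ j ih =>
      intro x n hC hj
      obtain ⟨n', rfl⟩ : ∃ n', n = n' + 1 := ⟨n - 1, by omega⟩
      have h2 : S.α (g^[n' + 1] x) = g^[n'] x := by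
        rw [Function.iterate_succ_apply' g]
        exact hg _ (hP _ (hC n' (by omega)))
      rw [Function.iterate_succ_apply, h2, ih x n' (fun m hm => hC m (by omega)) (by omega)]
      congr 1
      omega
  -- backward chains terminate in C
  have hterm : ∀ x : Z, x ∉ Ω → S.α x ∈ Ω → ∃ n, g^[n] x ∈ S.C := by
    intro x hx hax
    by_contra hcon
    push_neg at hcon
    have hchain : ∀ n, S.α^[n] (g^[n] x) = x := by
      intro n
      have := chainStep n x n (fun m _ => hcon m) le_rfl
      simpa using this
    obtain ⟨i, j, hij, heq⟩ := Finite.exists_ne_map_eq_of_infinite (fun n : ℕ => g^[n] x)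
    have key2 : ∀ i j : ℕ, i < j → g^[i] x = g^[j] x → False := by
      intro i j hlt heq
      have hx2 : S.α^[j - i] x = x := by
        conv_lhs => rw [← hchain i, ← Function.iterate_add_apply]
        have hji : j - i + i = j := by omega
        rw [hji, heq, hchain j]
      obtain ⟨m', hm'⟩ : ∃ m', j - i = m' + 1 := ⟨j - i - 1, by omega⟩
      have hxΩ : x ∈ Ω := by
        rw [← hx2, hm', Function.iterate_succ_apply]
        exact hΩiter m' _ hax
      exact hx hxΩ
    rcases lt_or_gt_of_ne hij with h | h
    · exact key2 i j h heq
    · exact key2 j i h heq.symm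
  -- backward chains stay outside Ω
  have notOmega : ∀ (x : Z), x ∉ Ω → ∀ (k : ℕ), (∀ m < k, g^[m] x ∉ S.C) →
      ∀ m ≤ k, g^[m] x ∉ Ω := by
    intro x hx k hC m
    induction m with
    | zero => intro _; simpa using hx
    | succ m ih =>
      intro hm hmem
      have h2 : S.α (g^[m + 1] x) = g^[m] x := by
        rw [Function.iterate_succ_apply' g]
        exact hg _ (hP _ (hC m (by omega)))
      exact ih (by omega) (h2 ▸ hinv _ hmem)
  -- main construction: each x entering Ω comes from a critical point ≠ ∞
  have key : ∀ x : Z, ∃ c : Z, (x ∉ Ω ∧ S.α x ∈ Ω) →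
      c ∈ S.C ∧ c ≠ S.infty ∧ ∃ k, S.α^[k] c = x ∧ ∀ j ≤ k, S.α^[j] c ∉ Ω := by
    intro x
    by_cases hx : x ∉ Ω ∧ S.α x ∈ Ω
    · obtain ⟨n, hn⟩ := hterm x hx.1 hx.2
      have hex : ∃ n, g^[n] x ∈ S.C := ⟨n, hn⟩
      set k := Nat.find hex with hk
      have hkC : g^[k] x ∈ S.C := Nat.find_spec hex
      have hmin : ∀ m < k, g^[m] x ∉ S.C := fun m hm => Nat.find_min hex hm
      refine ⟨g^[k] x, fun _ => ⟨hkC, ?_, k, ?_, ?_⟩⟩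
      · intro hinf
        have hstep : S.α^[k] (g^[k] x) = x := by
          have := chainStep k x k hmin le_rfl
          simpa using this
        have hxeq : x = S.infty := by
          rw [← hstep, hinf, Function.iterate_fixed S.infty_fixed]
        have : S.infty ∈ Ω := by
          have := hx.2
          rwa [hxeq, S.infty_fixed] at this
        exact hΩC _ this S.infty_crit
      · have := chainStep k x k hmin le_rfl
        simpa using this
      · intro j hj
        rw [chainStep j x k hmin hj]
        exact notOmega x hx.1 k hmin (k - j) (by omega)
    · exact ⟨x, fun h => absurd h hx⟩
  choose f hf using key
  have hsub : (Finset.univ.filter (fun z => z ∉ Ω ∧ S.α z ∈ Ω)).card ≤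
      (S.C.erase S.infty).card := by
    apply Finset.card_le_card_of_injOn f
    · intro x hxmem
      simp only [Finset.coe_filter, Finset.mem_filter, Finset.mem_univ, true_and, Set.mem_setOf_eq] at hxmem
      obtain ⟨h1, h2, _⟩ := hf x hxmem
      exact Finset.mem_erase.mpr ⟨h2, h1⟩
    · intro x hxm x' hxm' heq
      simp only [Finset.coe_filter, Finset.mem_univ, true_and, Set.mem_setOf_eq] at hxm hxm'
      obtain ⟨hc, hne, k, hk, hkΩ⟩ := hf x hxm
      obtain ⟨hc', hne', k', hk', hkΩ'⟩ := hf x' hxm'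
      rw [heq] at hk hkΩ
      rcases lt_trichotomy k k' with h | h | h
      · exfalso
        have h1 : S.α^[k + 1] (f x') ∈ Ω := by
          rw [Function.iterate_succ_apply', hk]
          exact hxm.2
        exact hkΩ' (k + 1) (by omega) h1
      · rw [h] at hk
        exact hk.symm.trans hk'
      · exfalso
        have h1 : S.α^[k' + 1] (f x') ∈ Ω := by
          rw [Function.iterate_succ_apply', hk']
          exact hxm'.2
        exact hkΩ (k' + 1) (by omega) h1
  have hC1 : (S.C.erase S.infty).card ≤ ∑ z ∈ S.C.erase S.infty, (S.ν z - 1) := by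
    rw [Finset.card_eq_sum_ones]
    apply Finset.sum_le_sum
    intro z hz
    have hzC : z ∈ S.C := Finset.mem_of_mem_erase hz
    have := (S.crit_iff z).mpr hzC
    omega
  have hC2 : ∑ z ∈ S.C.erase S.infty, (S.ν z - 1) ≤
      ∑ z ∈ Finset.univ.erase S.infty, (S.ν z - 1) :=
    Finset.sum_le_sum_of_subset (Finset.erase_subset_erase _ (Finset.subset_univ _))
  have hC3 : ∑ z ∈ Finset.univ.erase S.infty, (S.ν z - 1) + (S.ν S.infty - 1) =
      2 * (S.d - 1) := by
    rw [Finset.sum_erase_add _ _ (Finset.mem_univ _)]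
    exact S.riemann_hurwitz
  have hC4 : ∑ z ∈ Finset.univ.erase S.infty, (S.ν z - 1) = S.d - 1 := by
    rw [S.nu_infty] at hC3; omega
  omega
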